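/- Let M be a finite matroid of rank r. Then M is binary (admits a representation over F₂) if and only if H₁(M;F₂) is an F₂-vector space of dimension exactly r. -/

import Mathlib

open scoped Classical

/-- `ρ` is a representation of the matroid `M` over the field `K`. -/
def Matroid.IsRep {α : Type*} (M : Matroid α) (K : Type*) [Field K] {V : Type*}
    [AddCommGroup V] [Module K V] (ρ : α → V) : Prop :=
  (∀ S ⊆ M.E, (M.Indep S ↔ Set.InjOn ρ S ∧ LinearIndependent K ((↑) : (ρ '' S) → V))) ∧
    Submodule.span K (ρ '' M.E) = ⊤

/-- `M` is representable over the field `K`. -/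
def Matroid.RepresentableOver {α : Type*} (M : Matroid α) (K : Type) [Field K] : Prop :=
  ∃ (V : Type) (_ : AddCommGroup V) (_ : Module K V) (ρ : α → V), M.IsRep K ρ

/-- A matroid is binary if it admits a representation over `𝔽₂ = ZMod 2`. -/
def Matroid.IsBinary {α : Type*} (M : Matroid α) : Prop :=
  M.RepresentableOver (ZMod 2)

/-- A circuit of `M` is a minimal dependent set. -/
def Matroid.IsCircuit' {α : Type*} (M : Matroid α) (C : Set α) : Prop :=
  M.Dep C ∧ ∀ D, D ⊂ C → ¬ M.Dep D

/-- The subspace of the space of functions `M.E → 𝔽₂` spanned by the indicator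
functions of the circuits of `M`. -/
def Matroid.circuitSubspace {α : Type*} (M : Matroid α) :
    Submodule (ZMod 2) (↥M.E → ZMod 2) :=
  Submodule.span (ZMod 2)
    {f | ∃ C : Set α, M.IsCircuit' C ∧ f = fun e : ↥M.E => if (e : α) ∈ C then (1 : ZMod 2) else 0}


lemma zmod2_cases (x : ZMod 2) : x = 0 ∨ x = 1 := by revert x; decide

lemma char2_add_self {V : Type*} [AddCommGroup V] [Module (ZMod 2) V] (x : V) : x + x = 0 := by
  have h := two_smul (ZMod 2) x
  rw [show (2 : ZMod 2) = 0 by decide, zero_smul] at h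
  exact h.symm

/-- Over 𝔽₂, "injective with linearly independent image" is the same as
"no nonempty finite subset sums to zero". -/
lemma injOn_li_iff_sums {α : Type*} {V : Type*} [AddCommGroup V] [Module (ZMod 2) V]
    (ρ : α → V) (S : Set α) :
    (Set.InjOn ρ S ∧ LinearIndependent (ZMod 2) ((↑) : (ρ '' S) → V)) ↔
      ∀ t : Finset α, ↑t ⊆ S → t.Nonempty → ∑ e ∈ t, ρ e ≠ 0 := by
  constructor
  · rintro ⟨hinj, hli⟩ t htS hne h0
    have hinj' : ∀ x ∈ t, ∀ y ∈ t, ρ x = ρ y → x = y :=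
      fun x hx y hy => hinj (htS hx) (htS hy)
    have hsum : ∑ v ∈ t.image ρ, v = 0 := by
      rw [Finset.sum_image hinj']; exact h0
    have hli2 : LinearIndependent (ZMod 2) fun x : ↑S => ρ x :=
      (linearIndepOn_iff_image hinj).2 hli
    rw [linearIndependent_iff'] at hli2
    obtain ⟨a, ha⟩ := hne
    have haS : a ∈ S := htS ha
    set s : Finset ↑S := t.attach.image (fun x => (⟨x.1, htS x.2⟩ : ↑S)) with hs
    have hmem : (⟨a, haS⟩ : ↑S) ∈ s := by
      simp only [hs, Finset.mem_image, Finset.mem_attach]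
      exact ⟨⟨a, ha⟩, trivial, rfl⟩
    have hsum2 : ∑ j ∈ s, (1 : ZMod 2) • ρ (j : α) = 0 := by
      rw [hs, Finset.sum_image ?_]
      · simp only [one_smul]
        rw [Finset.sum_attach t (fun x => ρ x)]
        exact h0
      · intro x _ y _ hxy
        apply Subtype.ext; exact congrArg (fun z : ↑S => (z : α)) hxy
    have := hli2 s (fun _ => 1) hsum2 ⟨a, haS⟩ hmem
    exact absurd this one_ne_zero
  · intro h
    have hinj : Set.InjOn ρ S := by
      intro a ha b hb hab
      by_contra hne
      have : ({a, b} : Finset α).Nonempty := ⟨a, by simp⟩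
      refine h {a, b} ?_ this ?_
      · intro x hx; simp only [Finset.coe_insert, Finset.coe_singleton] at hx
        rcases hx with rfl | rfl <;> assumption
      · rw [Finset.sum_pair hne, hab]; exact char2_add_self _
    refine ⟨hinj, ?_⟩
    refine (linearIndepOn_iff_image hinj).1 ?_
    unfold LinearIndepOn
    rw [linearIndependent_iff']
    intro s g hg i hi
    rcases zmod2_cases (g i) with h0 | h1
    · exact h0
    exfalso
    set s' : Finset ↑S := s.filter (fun j => g j = 1) with hs'
    have hsum : ∑ j ∈ s', ρ ↑j = 0 := by
      rw [← hg]
      rw [Finset.sum_filter]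
      refine Finset.sum_congr rfl fun j hj => ?_
      rcases zmod2_cases (g j) with h | h <;> simp [h]
    set t : Finset α := s'.image (fun j : ↑S => (j : α)) with ht
    have hinj2 : Function.Injective (fun j : ↑S => (j : α)) := Subtype.val_injective
    have hts : ∑ e ∈ t, ρ e = 0 := by
      rw [ht, Finset.sum_image (fun x _ y _ h => hinj2 h)]; exact hsum
    refine h t ?_ ⟨↑i, ?_⟩ hts
    · intro x hx
      simp only [ht, Finset.mem_coe, Finset.mem_image] at hx
      obtain ⟨j, _, rfl⟩ := hx; exact j.2
    · simp only [ht, Finset.mem_image]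
      exact ⟨i, by simp [hs', hi, h1], rfl⟩

section MatroidHelpers

variable {α : Type*} {M : Matroid α}

lemma exists_isCircuit_subset [M.Finite] {S : Set α} (hS : M.Dep S) :
    ∃ C ⊆ S, M.IsCircuit' C := by
  obtain ⟨n, hn⟩ : ∃ n, S.ncard = n := ⟨_, rfl⟩
  induction n using Nat.strong_induction_on generalizing S with
  | _ n ih =>
    by_cases h : ∀ D, D ⊂ S → ¬ M.Dep D
    · exact ⟨S, subset_rfl, hS, h⟩
    · push_neg at h
      obtain ⟨D, hDS, hD⟩ := h
      obtain ⟨C, hCD, hC⟩ := ih D.ncard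
        (hn ▸ Set.ncard_lt_ncard hDS (M.set_finite S hS.subset_ground)) hD rfl
      exact ⟨C, hCD.trans hDS.subset, hC⟩

lemma Matroid.IsCircuit'.nonempty {C : Set α} (hC : M.IsCircuit' C) : C.Nonempty := by
  rw [Set.nonempty_iff_ne_empty]
  rintro rfl
  exact hC.1.not_indep M.empty_indep

lemma Matroid.IsCircuit'.subset_ground {C : Set α} (hC : M.IsCircuit' C) : C ⊆ M.E :=
  hC.1.subset_ground

lemma Matroid.IsCircuit'.eq_of_dep_subset {C D : Set α} (hC : M.IsCircuit' C) (hD : M.Dep D)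
    (hDC : D ⊆ C) : D = C := by
  by_contra hne
  exact hC.2 D (hDC.ssubset_of_ne hne) hD

end MatroidHelpers

section RepHelpers

variable {α : Type*} {M : Matroid α} {V : Type*} [AddCommGroup V] [Module (ZMod 2) V]
  {ρ : α → V}

lemma Matroid.IsRep.indep_iff_sums (hrep : M.IsRep (ZMod 2) ρ) {S : Set α} (hS : S ⊆ M.E) :
    M.Indep S ↔ ∀ t : Finset α, ↑t ⊆ S → t.Nonempty → ∑ e ∈ t, ρ e ≠ 0 := by
  rw [hrep.1 S hS, injOn_li_iff_sums]

lemma Matroid.IsRep.dep_of_sum_eq_zero (hrep : M.IsRep (ZMod 2) ρ) {t : Finset α}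
    (htE : ↑t ⊆ M.E) (hne : t.Nonempty) (h0 : ∑ e ∈ t, ρ e = 0) : M.Dep ↑t := by
  rw [Matroid.dep_iff]
  exact ⟨fun hi => ((hrep.indep_iff_sums htE).1 hi) t subset_rfl hne h0, htE⟩

lemma Matroid.IsRep.sum_circuit [M.Finite] (hrep : M.IsRep (ZMod 2) ρ) {C : Set α}
    (hC : M.IsCircuit' C) :
    ∑ e ∈ (M.set_finite C hC.subset_ground).toFinset, ρ e = 0 := by
  have hCE := hC.subset_ground
  have hnind : ¬ M.Indep C := hC.1.not_indep
  rw [hrep.indep_iff_sums hCE] at hnind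
  push_neg at hnind
  obtain ⟨t, htC, hne, h0⟩ := hnind
  have hdep : M.Dep ↑t := hrep.dep_of_sum_eq_zero (htC.trans hCE) hne h0
  have heq : (↑t : Set α) = C := hC.eq_of_dep_subset hdep htC
  have : (M.set_finite C hC.subset_ground).toFinset = t := by
    ext x
    simp only [Set.Finite.mem_toFinset, ← heq, Finset.mem_coe]
  rw [this]
  exact h0

/-- Bridge between sums over a subtype filter and sums over a `toFinset`. -/
lemma sum_filter_subtype [Fintype ↥M.E] {β : Type*} [AddCommMonoid β] {C : Set α}
    (hCE : C ⊆ M.E) (hfin : C.Finite) (f : α → β) :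
    ∑ e ∈ Finset.univ.filter (fun e : ↥M.E => (e : α) ∈ C), f ↑e = ∑ e ∈ hfin.toFinset, f e := by
  have himg : (Finset.univ.filter (fun e : ↥M.E => (e : α) ∈ C)).image
      (fun e : ↥M.E => (e : α)) = hfin.toFinset := by
    ext x
    simp only [Finset.mem_image, Finset.mem_filter, Finset.mem_univ, true_and,
      Set.Finite.mem_toFinset]
    constructor
    · rintro ⟨e, he, rfl⟩; exact he
    · intro hx; exact ⟨⟨x, hCE hx⟩, hx, rfl⟩
  rw [← himg, Finset.sum_image (fun x _ y _ h => Subtype.ext h)]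

end RepHelpers

/-- A finite matroid of rank `r` is binary if and only if `H₁(M; 𝔽₂)`, the quotient of the
space of functions `M.E → 𝔽₂` by the span of the indicator functions of the circuits, has
dimension exactly `r` over `𝔽₂`. -/
theorem binary_iff_finrank_H1_eq_rank {α : Type*} (M : Matroid α) [M.Finite]
    (r : ℕ) (B : Set α) (hB : M.IsBase B) (hBr : B.ncard = r) :
    M.IsBinary ↔
      Module.finrank (ZMod 2) ((↥M.E → ZMod 2) ⧸ M.circuitSubspace) = r := by
  haveI : Fintype ↥M.E := M.ground_finite.fintype
  constructor
  · rintro ⟨V, _, _, ρ, hrep⟩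
    -- the boundary map
    let Φ : (↥M.E → ZMod 2) →ₗ[ZMod 2] V :=
      { toFun := fun f => ∑ e : ↥M.E, f e • ρ ↑e
        map_add' := fun f g => by
          simp [add_smul, Finset.sum_add_distrib]
        map_smul' := fun c f => by
          simp [Pi.smul_apply, smul_eq_mul, mul_smul, Finset.smul_sum] }
    have hΦ_ind : ∀ {C : Set α} (hCE : C ⊆ M.E) (hfin : C.Finite),
        Φ (fun e : ↥M.E => if (e : α) ∈ C then 1 else 0) = ∑ e ∈ hfin.toFinset, ρ e := by
      intro C hCE hfin
      show (∑ e : ↥M.E, (if (e : α) ∈ C then (1 : ZMod 2) else 0) • ρ ↑e) = _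
      rw [← sum_filter_subtype hCE hfin (fun a => ρ a), Finset.sum_filter]
      refine Finset.sum_congr rfl fun e _ => ?_
      by_cases h : (e : α) ∈ C <;> simp [h]
    -- the circuit subspace is contained in the kernel
    have hle : M.circuitSubspace ≤ LinearMap.ker Φ := by
      rw [Matroid.circuitSubspace, Submodule.span_le]
      rintro f ⟨C, hC, rfl⟩
      rw [SetLike.mem_coe, LinearMap.mem_ker, hΦ_ind hC.subset_ground
        (M.set_finite C hC.subset_ground)]
      exact hrep.sum_circuit hC
    -- the kernel is contained in the circuit subspace
    have hge : LinearMap.ker Φ ≤ M.circuitSubspace := by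
      intro f hf
      obtain ⟨n, hn⟩ : ∃ n, (Finset.univ.filter (fun e : ↥M.E => f e ≠ 0)).card = n := ⟨_, rfl⟩
      induction n using Nat.strong_induction_on generalizing f with
      | _ n ih =>
      by_cases hf0 : f = 0
      · rw [hf0]; exact zero_mem _
      set T : Set α := (fun e : ↥M.E => (e : α)) '' {e : ↥M.E | f e ≠ 0} with hT
      have hTE : T ⊆ M.E := by rintro x ⟨e, _, rfl⟩; exact e.2
      have hTfin : T.Finite := M.set_finite T hTE
      have hfT : f = fun e : ↥M.E => if (e : α) ∈ T then 1 else 0 := by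
        funext e
        by_cases h : (e : α) ∈ T
        · rw [if_pos h]
          obtain ⟨e', he', hee⟩ := h
          have he2 : e' = e := Subtype.ext hee
          subst he2
          rcases zmod2_cases (f e') with h0 | h1
          · exact absurd h0 he'
          · exact h1
        · rw [if_neg h]
          by_contra hne
          exact h ⟨e, hne, rfl⟩
      have hTne : T.Nonempty := by
        rw [Set.nonempty_iff_ne_empty]
        intro hemp
        apply hf0
        rw [hfT]
        funext e
        rw [hemp]
        simp
      have hsum : ∑ e ∈ hTfin.toFinset, ρ e = 0 := by
        rw [← hΦ_ind hTE hTfin, ← hfT]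
        exact hf
      have hTcoe : (↑hTfin.toFinset : Set α) = T := by simp
      have hdep : M.Dep ↑hTfin.toFinset :=
        hrep.dep_of_sum_eq_zero (by rw [hTcoe]; exact hTE)
          (hTfin.toFinset_nonempty.2 hTne) hsum
      rw [hTcoe] at hdep
      obtain ⟨C, hCT, hC⟩ := exists_isCircuit_subset hdep
      set χ : ↥M.E → ZMod 2 := fun e => if (e : α) ∈ C then 1 else 0 with hχ
      have hχmem : χ ∈ M.circuitSubspace := Submodule.subset_span ⟨C, hC, rfl⟩
      have hχker : χ ∈ LinearMap.ker Φ := hle hχmem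
      have hfχker : f + χ ∈ LinearMap.ker Φ := add_mem hf hχker
      have hcard : (Finset.univ.filter (fun e : ↥M.E => (f + χ) e ≠ 0)).card < n := by
        rw [← hn]
        apply Finset.card_lt_card
        constructor
        · intro e he
          simp only [Finset.mem_filter, Finset.mem_univ, true_and, Pi.add_apply] at he ⊢
          intro hfe
          apply he
          rw [hfe, zero_add, hχ]
          by_cases h : (e : α) ∈ C
          · exfalso
            apply he
            have : f e = 1 := by rw [hfT]; simp only [if_pos (hCT h)]
            rw [this, hχ]
            simp only [if_pos h]
            exact char2_add_self 1
          · simp [h]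
        · rw [Finset.not_subset]
          obtain ⟨c, hc⟩ := hC.nonempty
          have hcT : c ∈ T := hCT hc
          have hcE : c ∈ M.E := hTE hcT
          refine ⟨⟨c, hcE⟩, ?_, ?_⟩
          · simp only [Finset.mem_filter, Finset.mem_univ, true_and]
            rw [hfT]
            simp only [if_pos hcT]
            exact one_ne_zero
          · simp only [Finset.mem_filter, Finset.mem_univ, true_and, Pi.add_apply, not_not]
            rw [hfT, hχ]
            simp only [if_pos hcT, if_pos hc]
            exact char2_add_self 1
      have hmem2 : f + χ ∈ M.circuitSubspace := ih _ hcard hfχker rfl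
      have : f = (f + χ) + χ := by
        rw [add_assoc, char2_add_self, add_zero]
      rw [this]
      exact add_mem hmem2 hχmem
    have hker : M.circuitSubspace = LinearMap.ker Φ := le_antisymm hle hge
    -- Φ is surjective
    have hsurj : Function.Surjective Φ := by
      rw [← LinearMap.range_eq_top, ← top_le_iff, ← hrep.2, Submodule.span_le]
      rintro v ⟨a, ha, rfl⟩
      refine ⟨Pi.single ⟨a, ha⟩ 1, ?_⟩
      show (∑ e : ↥M.E, (Pi.single (⟨a, ha⟩ : ↥M.E) (1 : ZMod 2) : ↥M.E → ZMod 2) e • ρ ↑e)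
        = ρ a
      rw [Finset.sum_eq_single (⟨a, ha⟩ : ↥M.E)]
      · simp
      · intro b _ hb
        rw [Pi.single_eq_of_ne hb, zero_smul]
      · intro h; exact absurd (Finset.mem_univ _) h
    rw [hker, (Φ.quotKerEquivOfSurjective hsurj).finrank_eq]
    -- finrank V = r via the basis coming from B
    have hBE := hB.subset_ground
    have hBfin : B.Finite := M.set_finite B hBE
    have hBi := hB.indep
    obtain ⟨hinj, hli⟩ := (hrep.1 B hBE).1 hBi
    have hspan : Submodule.span (ZMod 2) (ρ '' B) = ⊤ := by
      rw [← top_le_iff, ← hrep.2, Submodule.span_le]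
      rintro v ⟨a, ha, rfl⟩
      by_cases haB : a ∈ B
      · exact Submodule.subset_span ⟨a, haB, rfl⟩
      · have hdep := hB.insert_dep ⟨ha, haB⟩
        obtain ⟨C, hCsub, hC⟩ := exists_isCircuit_subset hdep
        have haC : a ∈ C := by
          by_contra haC
          refine hC.1.not_indep (hBi.subset fun x hx => ?_)
          rcases hCsub hx with rfl | hxB
          · exact absurd hx haC
          · exact hxB
        have hCfin := M.set_finite C hC.subset_ground
        have hsum := hrep.sum_circuit hC
        have haT : a ∈ hCfin.toFinset := by simpa using haC
        rw [← Finset.add_sum_erase _ _ haT] at hsum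
        have hra : ρ a = ∑ e ∈ hCfin.toFinset.erase a, ρ e := by
          have h2 := congrArg (· + ∑ e ∈ hCfin.toFinset.erase a, ρ e) hsum
          simp only [zero_add] at h2
          rw [add_assoc, char2_add_self, add_zero] at h2
          exact h2
        rw [SetLike.mem_coe, hra]
        refine Submodule.sum_mem _ fun e he => Submodule.subset_span ⟨e, ?_, rfl⟩
        have heC : e ∈ C := by simpa using Finset.mem_of_mem_erase he
        have hne : e ≠ a := Finset.ne_of_mem_erase he
        rcases hCsub heC with rfl | hxB
        · exact absurd rfl hne
        · exact hxB
    haveI : Fintype ↥(ρ '' B) := (hBfin.image ρ).fintype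
    have hb : Module.Basis ↥(ρ '' B) (ZMod 2) V :=
      Module.Basis.mk hli (by rw [Subtype.range_coe, hspan])
    rw [Module.finrank_eq_card_basis hb, ← Nat.card_eq_fintype_card,
      Nat.card_coe_set_eq, Set.ncard_image_of_injOn hinj, hBr]
  · intro hdim
    set n := Fintype.card ↥M.E with hn
    set Q := ((↥M.E → ZMod 2) ⧸ M.circuitSubspace) with hQdef
    let δ : α → (↥M.E → ZMod 2) := fun a e => if (e : α) = a then 1 else 0
    let ρ₀ : α → Q := fun a => Submodule.Quotient.mk (δ a)
    -- sums of the indicator vectors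
    have hδsum : ∀ t : Finset α,
        ∑ a ∈ t, δ a = fun e : ↥M.E => if (e : α) ∈ t then 1 else 0 := by
      intro t
      funext e
      rw [Finset.sum_apply]
      exact Finset.sum_ite_eq t (e : α) (fun _ => 1)
    -- dimension bookkeeping
    have hW : Module.finrank (ZMod 2) (↥M.E → ZMod 2) = n := Module.finrank_pi _
    have hqs := Submodule.finrank_quotient_add_finrank M.circuitSubspace
    rw [hW, hdim] at hqs
    have hrn : r ≤ n := le_of_add_le_left hqs.le
    have hfrp : Module.finrank (ZMod 2) ↥M.circuitSubspace = n - r := by omega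
    -- the key claim: an element of the circuit space vanishing off a base is zero
    have claim : ∀ B' : Set α, M.IsBase B' →
        ∀ f ∈ M.circuitSubspace, (∀ e : ↥M.E, (e : α) ∉ B' → f e = 0) → f = 0 := by
      intro B' hB' f hf hvan
      have hB'E := hB'.subset_ground
      have hB'card : B'.ncard = r := (hB'.ncard_eq_ncard_of_isBase hB).trans hBr
      set D : Set α := M.E \ B' with hD
      haveI : Fintype ↥D := (M.set_finite D Set.diff_subset).fintype
      have hDcard : Fintype.card ↥D = n - r := by
        rw [← Nat.card_eq_fintype_card, Nat.card_coe_set_eq, hD,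
          Set.ncard_diff hB'E (M.set_finite B' hB'E), hB'card]
        congr 1
        rw [hn, ← Nat.card_eq_fintype_card, Nat.card_coe_set_eq]
      -- fundamental circuits
      have hfc : ∀ e : ↥D, ∃ Ce, M.IsCircuit' Ce ∧ Ce ⊆ insert (↑e : α) B' ∧ (e : α) ∈ Ce := by
        intro e
        have hdep := hB'.insert_dep e.2
        obtain ⟨Ce, hCsub, hCe⟩ := exists_isCircuit_subset hdep
        refine ⟨Ce, hCe, hCsub, ?_⟩
        by_contra h
        refine hCe.1.not_indep (hB'.indep.subset fun x hx => ?_)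
        rcases Set.mem_insert_iff.1 (hCsub hx) with rfl | hxB
        · exact absurd hx h
        · exact hxB
      choose C hC1 hC2 hC3 using hfc
      set v : ↥D → (↥M.E → ZMod 2) := fun e x => if (x : α) ∈ C e then 1 else 0 with hv
      have hveval : ∀ (i j : ↥D), v j ⟨↑i, i.2.1⟩ = if i = j then 1 else 0 := by
        intro i j
        by_cases h : i = j
        · subst h
          rw [if_pos rfl]
          exact if_pos (hC3 i)
        · rw [if_neg h]
          refine if_neg fun hmem => ?_
          rcases Set.mem_insert_iff.1 (hC2 j hmem) with heq | hB'mem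
          · exact h (Subtype.ext heq)
          · exact i.2.2 hB'mem
      have hvmem : ∀ e : ↥D, v e ∈ M.circuitSubspace :=
        fun e => Submodule.subset_span ⟨C e, hC1 e, rfl⟩
      have hvli : LinearIndependent (ZMod 2) v := by
        rw [linearIndependent_iff']
        intro s g hg i hi
        have hcf := congrFun hg ⟨↑i, i.2.1⟩
        rw [Finset.sum_apply] at hcf
        simp only [Pi.smul_apply, Pi.zero_apply] at hcf
        have : ∑ j ∈ s, g j • v j ⟨↑i, i.2.1⟩ = g i := by
          rw [Finset.sum_congr rfl (fun j _ => by rw [hveval i j, smul_eq_mul, mul_ite,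
            mul_one, mul_zero])]
          exact Finset.sum_ite_eq s i (fun j => g j) ▸ if_pos hi
        rw [this] at hcf
        exact hcf
      have hsple : Submodule.span (ZMod 2) (Set.range v) ≤ M.circuitSubspace := by
        rw [Submodule.span_le]
        rintro x ⟨e, rfl⟩
        exact hvmem e
      have hspan_eq : Submodule.span (ZMod 2) (Set.range v) = M.circuitSubspace := by
        refine Submodule.eq_of_le_of_finrank_eq hsple ?_
        rw [finrank_span_eq_card hvli, hDcard, hfrp]
      rw [← hspan_eq, Submodule.mem_span_range_iff_exists_fun] at hf
      obtain ⟨c, hc⟩ := hf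
      have hc0 : ∀ i : ↥D, c i = 0 := by
        intro i
        have hcf := congrFun hc ⟨↑i, i.2.1⟩
        rw [Finset.sum_apply] at hcf
        simp only [Pi.smul_apply] at hcf
        have : ∑ j : ↥D, c j • v j ⟨↑i, i.2.1⟩ = c i := by
          rw [Finset.sum_congr rfl (fun j _ => by rw [hveval i j, smul_eq_mul, mul_ite,
            mul_one, mul_zero])]
          exact Finset.sum_ite_eq Finset.univ i (fun j => c j) ▸ if_pos (Finset.mem_univ i)
        rw [this, hvan _ i.2.2] at hcf
        exact hcf
      rw [← hc]
      funext x
      rw [Finset.sum_apply]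
      refine Finset.sum_eq_zero fun j _ => ?_
      rw [hc0 j, zero_smul]
      rfl
    -- a nonzero sum criterion for the quotient representation
    have hsum_crit : ∀ (S : Set α), S ⊆ M.E → M.Indep S →
        ∀ t : Finset α, ↑t ⊆ S → t.Nonempty → ∑ a ∈ t, ρ₀ a ≠ 0 := by
      intro S hSE hSi t htS hne h0
      obtain ⟨B', hB', hSB'⟩ := hSi.exists_isBase_superset
      have hmk : Submodule.Quotient.mk (p := M.circuitSubspace) (∑ a ∈ t, δ a)
          = ∑ a ∈ t, ρ₀ a := by
        rw [← Submodule.mkQ_apply, map_sum]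
        rfl
      have hmem : (∑ a ∈ t, δ a) ∈ M.circuitSubspace := by
        rw [← Submodule.Quotient.mk_eq_zero M.circuitSubspace, hmk]
        exact h0
      have hzero : (∑ a ∈ t, δ a) = 0 := by
        refine claim B' hB' _ hmem fun e he => ?_
        simp only [hδsum t]
        exact if_neg (fun hmem2 => he (hSB' (htS hmem2)))
      obtain ⟨a, ha⟩ := hne
      have h1 := congrFun ((hδsum t).symm.trans hzero) ⟨a, hSE (htS ha)⟩
      simp only [Pi.zero_apply] at h1
      rw [if_pos ha] at h1
      exact one_ne_zero h1
    have hdep_crit : ∀ (S : Set α), S ⊆ M.E → ¬ M.Indep S →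
        ∃ t : Finset α, ↑t ⊆ S ∧ t.Nonempty ∧ ∑ a ∈ t, ρ₀ a = 0 := by
      intro S hSE hSni
      have hdep : M.Dep S := (M.dep_iff).2 ⟨hSni, hSE⟩
      obtain ⟨Cx, hCS, hCx⟩ := exists_isCircuit_subset hdep
      have hCfin := M.set_finite Cx hCx.subset_ground
      refine ⟨hCfin.toFinset, by simpa using hCS, hCfin.toFinset_nonempty.2 hCx.nonempty, ?_⟩
      have hmk : Submodule.Quotient.mk (p := M.circuitSubspace)
          (∑ a ∈ hCfin.toFinset, δ a) = ∑ a ∈ hCfin.toFinset, ρ₀ a := by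
        rw [← Submodule.mkQ_apply, map_sum]
        rfl
      rw [← hmk, Submodule.Quotient.mk_eq_zero, hδsum]
      have heq : (fun e : ↥M.E => if (e : α) ∈ hCfin.toFinset then (1 : ZMod 2) else 0)
          = fun e : ↥M.E => if (e : α) ∈ Cx then 1 else 0 := by
        funext e
        simp [Set.Finite.mem_toFinset]
      rw [heq]
      exact Submodule.subset_span ⟨Cx, hCx, rfl⟩
    -- move to a small universe
    haveI : FiniteDimensional (ZMod 2) Q := by infer_instance
    let bQ := Module.finBasis (ZMod 2) Q
    let eQ := bQ.equivFun
    refine ⟨Fin (Module.finrank (ZMod 2) Q) → ZMod 2, inferInstance, inferInstance,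
      fun a => eQ (ρ₀ a), ?_, ?_⟩
    · intro S hSE
      rw [injOn_li_iff_sums]
      have hsum_eq : ∀ t : Finset α, ∑ a ∈ t, eQ (ρ₀ a) = eQ (∑ a ∈ t, ρ₀ a) :=
        fun t => (map_sum eQ ρ₀ t).symm
      constructor
      · intro hSi t htS hne h0
        refine hsum_crit S hSE hSi t htS hne ?_
        rw [hsum_eq] at h0
        exact (map_eq_zero_iff eQ eQ.injective).1 h0
      · intro hcrit
        by_contra hSni
        obtain ⟨t, htS, hne, h0⟩ := hdep_crit S hSE hSni
        refine hcrit t htS hne ?_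
        rw [hsum_eq, h0, map_zero]
    · have hδspan : Submodule.span (ZMod 2) (δ '' M.E) = ⊤ := by
        rw [← top_le_iff, ← (Pi.basisFun (ZMod 2) ↥M.E).span_eq, Submodule.span_le]
        rintro x ⟨i, rfl⟩
        refine Submodule.subset_span ⟨↑i, i.2, ?_⟩
        rw [Pi.basisFun_apply]
        funext x
        rw [Pi.single_apply]
        show (if (x : α) = ↑i then (1 : ZMod 2) else 0) = _
        by_cases h : x = i
        · subst h; rw [if_pos rfl, if_pos rfl]
        · rw [if_neg (fun hc => h (Subtype.ext hc)), if_neg h]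
      have himg : (fun a => eQ (ρ₀ a)) '' M.E
          = (eQ.toLinearMap ∘ₗ M.circuitSubspace.mkQ) '' (δ '' M.E) := by
        rw [Set.image_image]
        rfl
      rw [himg, ← Submodule.map_span, hδspan, Submodule.map_top, LinearMap.range_eq_top]
      exact eQ.surjective.comp (Submodule.mkQ_surjective _)
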